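/- Let N, r ≥ 1, let {A_k}_{k≥1} be N×N row-stochastic matrices with an absolute probability sequence {φ_k} (stochastic vectors with φ_kᵀ = φ_{k+1}ᵀ A_k), write Φ_A(k,s) = A_k A_{k−1}⋯A_s, and suppose there exist C > 0 and β ∈ (0,1) with ‖Φ_A(k,s) − 1_N φ_sᵀ‖ ≤ C β^{k−s} for all k ≥ s ≥ 1. Let {ω^k}_{k≥1} ⊆ ℝ^{N×r} satisfy ω^{k+1} = A_k ω^k + d^k with ‖d^k‖ ≤ K α_k for a constant K > 0 and non-negative reals α_k. Then there exist constants C₂, C₃, C₄ > 0 such that for all k ≥ 1, ‖ω^{k+1} − 1_N φ_{k+1}ᵀ ω^{k+1}‖ ≤ C₂ β^{k−1} + C₃ ∑_{l=1}^{k−1} β^{k−1−l} α_l + C₄ α_k. -/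

import Mathlib

/-- Frobenius norm of a real matrix. -/
noncomputable def frobNorm {ι κ : Type*} [Fintype ι] [Fintype κ]
    (M : ι → κ → ℝ) : ℝ :=
  Real.sqrt (∑ i, ∑ j, (M i j) ^ 2)

/-- `PhiA A s t` is the backward matrix product Φ_A(s+t, s) = A(s+t)⋯A(s). -/
def PhiA {N : ℕ} (A : ℕ → Matrix (Fin N) (Fin N) ℝ) (s : ℕ) :
    ℕ → Matrix (Fin N) (Fin N) ℝ
  | 0 => A s
  | t + 1 => A (s + t + 1) * PhiA A s t

section frob
variable {ι κ μ : Type*} [Fintype ι] [Fintype κ] [Fintype μ]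
set_option linter.unusedSectionVars false

noncomputable def toE (M : ι → κ → ℝ) : EuclideanSpace ℝ (ι × κ) :=
  WithLp.toLp 2 (fun p : ι × κ => M p.1 p.2)

lemma frob_eq (M : ι → κ → ℝ) : frobNorm M = ‖toE M‖ := by
  rw [EuclideanSpace.norm_eq]
  simp [frobNorm, Fintype.sum_prod_type, toE, Real.norm_eq_abs, sq_abs]

lemma frob_nonneg (M : ι → κ → ℝ) : 0 ≤ frobNorm M := Real.sqrt_nonneg _

lemma frob_zero : frobNorm (fun (_ : ι) (_ : κ) => (0:ℝ)) = 0 := by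
  simp [frobNorm]

lemma frob_add_le (M P : ι → κ → ℝ) :
    frobNorm (fun i j => M i j + P i j) ≤ frobNorm M + frobNorm P := by
  rw [frob_eq, frob_eq, frob_eq]
  have e : (toE fun i j => M i j + P i j) = toE M + toE P := by
    simp only [toE, ← WithLp.toLp_add]; rfl
  rw [e]; exact norm_add_le (toE M) (toE P)

lemma frob_neg (M : ι → κ → ℝ) : frobNorm (fun i j => -M i j) = frobNorm M := by
  simp [frobNorm]

lemma frob_sub_le (M P : ι → κ → ℝ) :
    frobNorm (fun i j => M i j - P i j) ≤ frobNorm M + frobNorm P := by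
  have := frob_add_le M (fun i j => -P i j)
  simpa [sub_eq_add_neg, frob_neg] using this

lemma frob_mul_le (M : ι → κ → ℝ) (P : κ → μ → ℝ) :
    frobNorm (fun i c => ∑ j, M i j * P j c) ≤ frobNorm M * frobNorm P := by
  unfold frobNorm
  rw [← Real.sqrt_mul (by positivity)]
  apply Real.sqrt_le_sqrt
  calc ∑ i, ∑ c, (∑ j, M i j * P j c) ^ 2
      ≤ ∑ i, ∑ c, (∑ j, M i j ^ 2) * (∑ j, P j c ^ 2) := by
        apply Finset.sum_le_sum; intro i _
        apply Finset.sum_le_sum; intro c _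
        exact Finset.sum_mul_sq_le_sq_mul_sq _ _ _
    _ = (∑ i, ∑ j, M i j ^ 2) * (∑ j, ∑ c, P j c ^ 2) := by
        rw [Finset.sum_comm (s := Finset.univ) (t := Finset.univ) (f := fun j c => P j c ^ 2)]
        rw [Finset.sum_mul_sum]

lemma frob_sum_le {σ : Type*} (s : Finset σ) (M : σ → ι → κ → ℝ) :
    frobNorm (fun i j => ∑ l ∈ s, M l i j) ≤ ∑ l ∈ s, frobNorm (M l) := by
  classical
  induction s using Finset.induction_on with
  | empty => simp [frob_zero]
  | insert a t h ih =>
    calc frobNorm (fun i j => ∑ l ∈ insert a t, M l i j)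
        = frobNorm (fun i j => M a i j + ∑ l ∈ t, M l i j) := by
          simp [Finset.sum_insert h]
      _ ≤ frobNorm (M a) + frobNorm (fun i j => ∑ l ∈ t, M l i j) := frob_add_le _ _
      _ ≤ frobNorm (M a) + ∑ l ∈ t, frobNorm (M l) := by linarith
      _ = ∑ l ∈ insert a t, frobNorm (M l) := by rw [Finset.sum_insert h]

end frob

/-- The rank-one matrix `1 vᵀ`. -/
def onephi {N : ℕ} (v : Fin N → ℝ) : Matrix (Fin N) (Fin N) ℝ :=
  Matrix.of fun _ j => v j

/-- Backward product of the matrices `A k - 1 φ_kᵀ`. -/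
def PB {N : ℕ} (A : ℕ → Matrix (Fin N) (Fin N) ℝ) (φ : ℕ → Fin N → ℝ) (s : ℕ) :
    ℕ → Matrix (Fin N) (Fin N) ℝ
  | 0 => A s - onephi (φ s)
  | t + 1 => (A (s + t + 1) - onephi (φ (s + t + 1))) * PB A φ s t

lemma frob_onephi_le {N : ℕ} (v : Fin N → ℝ) (h0 : ∀ j, 0 ≤ v j) (h1 : ∑ j, v j = 1) :
    frobNorm (onephi v : Fin N → Fin N → ℝ) ≤ Real.sqrt N := by
  apply Real.sqrt_le_sqrt
  have hsq : ∑ j, v j ^ 2 ≤ 1 := by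
    calc ∑ j, v j ^ 2 ≤ ∑ j, v j := by
          apply Finset.sum_le_sum; intro j _
          have hle : v j ≤ 1 := by
            rw [← h1]
            exact Finset.single_le_sum (fun i _ => h0 i) (Finset.mem_univ j)
          nlinarith [h0 j]
      _ = 1 := h1
  calc ∑ i : Fin N, ∑ j, (onephi v i j) ^ 2 = ∑ i : Fin N, ∑ j, v j ^ 2 := rfl
    _ = (N : ℝ) * ∑ j, v j ^ 2 := by simp [Finset.sum_const]
    _ ≤ (N : ℝ) * 1 := by
        apply mul_le_mul_of_nonneg_left hsq (by positivity)
    _ = (N : ℝ) := by ring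

section matfrob
variable {n m p : Type*} [Fintype n] [Fintype m] [Fintype p]

lemma frob_matrix_mul_le (M : Matrix n m ℝ) (P : Matrix m p ℝ) :
    frobNorm (M * P : Matrix n p ℝ) ≤ frobNorm M * frobNorm P := by
  have e : ((M * P : Matrix n p ℝ) : n → p → ℝ) = fun i c => ∑ j, M i j * P j c := by
    ext i c; exact Matrix.mul_apply
  rw [e]; exact frob_mul_le _ _

lemma frob_matrix_sub_le (M P : Matrix n m ℝ) :
    frobNorm ((M - P : Matrix n m ℝ) : n → m → ℝ) ≤ frobNorm M + frobNorm P := by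
  have e : ((M - P : Matrix n m ℝ) : n → m → ℝ) = fun i j => M i j - P i j := rfl
  rw [e]; exact frob_sub_le _ _

lemma frob_matrix_add_le (M P : Matrix n m ℝ) :
    frobNorm ((M + P : Matrix n m ℝ) : n → m → ℝ) ≤ frobNorm M + frobNorm P := by
  have e : ((M + P : Matrix n m ℝ) : n → m → ℝ) = fun i j => M i j + P i j := rfl
  rw [e]; exact frob_add_le _ _

lemma frob_matrix_sum_le {μ : Type*} (s : Finset μ) (M : μ → Matrix n m ℝ) :
    frobNorm ((∑ l ∈ s, M l : Matrix n m ℝ) : n → m → ℝ) ≤ ∑ l ∈ s, frobNorm (M l) := by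
  have e : ((∑ l ∈ s, M l : Matrix n m ℝ) : n → m → ℝ) = fun i j => ∑ l ∈ s, M l i j := by
    ext i j; rw [Matrix.sum_apply]
  rw [e]; exact frob_sum_le _ _

end matfrob


/-- Let {A_k}_{k≥1} be N×N row-stochastic matrices with an absolute
probability sequence {φ_k} and geometric mixing ‖Φ_A(k,s) − 1_N φ_sᵀ‖ ≤ C β^{k−s}.
Let ω^{k+1} = A_k ω^k + d^k with ‖d^k‖ ≤ K α_k, α_k ≥ 0. Then there are constants
C₂, C₃, C₄ > 0 such that for all k ≥ 1,
‖ω^{k+1} − 1_N φ_{k+1}ᵀ ω^{k+1}‖ ≤ C₂ β^{k−1} + C₃ ∑_{l=1}^{k−1} β^{k−1−l} α_l + C₄ α_k. -/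
theorem stmt10 (N r : ℕ) (hN : 1 ≤ N) (hr : 1 ≤ r)
    (A : ℕ → Matrix (Fin N) (Fin N) ℝ)
    (hAnn : ∀ k, 1 ≤ k → ∀ i j, 0 ≤ A k i j)
    (hArow : ∀ k, 1 ≤ k → ∀ i, ∑ j, A k i j = 1)
    (φ : ℕ → Fin N → ℝ)
    (hφstoch : ∀ k, (∀ j, 0 ≤ φ k j) ∧ ∑ j, φ k j = 1)
    (hφaps : ∀ k, 1 ≤ k → ∀ j, φ k j = ∑ i, φ (k + 1) i * A k i j)
    (C β : ℝ) (hC : 0 < C) (hβ : β ∈ Set.Ioo (0 : ℝ) 1)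
    (hgeo : ∀ s k, 1 ≤ s → s ≤ k →
      frobNorm (fun i j => PhiA A s (k - s) i j - φ s j) ≤ C * β ^ (k - s))
    (ω : ℕ → Matrix (Fin N) (Fin r) ℝ) (d : ℕ → Matrix (Fin N) (Fin r) ℝ)
    (hrec : ∀ k, 1 ≤ k → ω (k + 1) = A k * ω k + d k)
    (K : ℝ) (hK : 0 < K) (α : ℕ → ℝ) (hα : ∀ k, 0 ≤ α k)
    (hd : ∀ k, 1 ≤ k → frobNorm (d k) ≤ K * α k) :
    ∃ C₂ C₃ C₄ : ℝ, 0 < C₂ ∧ 0 < C₃ ∧ 0 < C₄ ∧ ∀ k, 1 ≤ k →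
      frobNorm (fun i c => ω (k + 1) i c - ∑ j, φ (k + 1) j * ω (k + 1) j c)
        ≤ C₂ * β ^ (k - 1) + C₃ * ∑ l ∈ Finset.Ico 1 k, β ^ (k - 1 - l) * α l
            + C₄ * α k := by
  obtain ⟨hβ0, hβ1⟩ := hβ
  -- basic algebra with the rank-one matrices
  have hAF : ∀ k s, 1 ≤ k → A k * onephi (φ s) = onephi (φ s) := by
    intro k s hk; ext i j
    simp [Matrix.mul_apply, onephi, ← Finset.sum_mul, hArow k hk i]
  have hFA : ∀ k, 1 ≤ k → onephi (φ (k + 1)) * A k = onephi (φ k) := by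
    intro k hk; ext i j
    simp only [Matrix.mul_apply, onephi, Matrix.of_apply]
    exact (hφaps k hk j).symm
  have hFF : ∀ a b, onephi (φ a) * onephi (φ b) = onephi (φ b) := by
    intro a b; ext i j
    simp [Matrix.mul_apply, onephi, ← Finset.sum_mul, (hφstoch a).2]
  have hFPhi : ∀ s, 1 ≤ s → ∀ t, onephi (φ (s + t + 1)) * PhiA A s t = onephi (φ s) := by
    intro s hs t
    induction t with
    | zero => exact hFA s hs
    | succ t ih =>
      have h1 : PhiA A s (t + 1) = A (s + t + 1) * PhiA A s t := rfl
      have h2 : s + (t + 1) + 1 = (s + t + 1) + 1 := by omega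
      rw [h1, h2, ← Matrix.mul_assoc, hFA (s + t + 1) (by omega), ih]
  have hPBeq : ∀ s, 1 ≤ s → ∀ t, PB A φ s t = PhiA A s t - onephi (φ s) := by
    intro s hs t
    induction t with
    | zero => rfl
    | succ t ih =>
      have h1 : PB A φ s (t + 1) = (A (s + t + 1) - onephi (φ (s + t + 1))) * PB A φ s t := rfl
      have h2 : PhiA A s (t + 1) = A (s + t + 1) * PhiA A s t := rfl
      rw [h1, ih, Matrix.sub_mul, Matrix.mul_sub, Matrix.mul_sub, hAF (s + t + 1) s (by omega), hFPhi s hs t,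
        hFF, h2]
      abel
  -- one-step error recursion
  have hErrRec : ∀ k, 1 ≤ k → ω (k + 1) - onephi (φ (k + 1)) * ω (k + 1) =
      (A k - onephi (φ k)) * (ω k - onephi (φ k) * ω k)
        + (d k - onephi (φ (k + 1)) * d k) := by
    intro k hk
    have e1 : onephi (φ (k + 1)) * (A k * ω k + d k)
        = onephi (φ k) * ω k + onephi (φ (k + 1)) * d k := by
      rw [Matrix.mul_add, ← Matrix.mul_assoc, hFA k hk]
    have e2 : (A k - onephi (φ k)) * (ω k - onephi (φ k) * ω k)
        = A k * ω k - onephi (φ k) * ω k := by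
      rw [Matrix.mul_sub, Matrix.sub_mul, Matrix.sub_mul, ← Matrix.mul_assoc, ← Matrix.mul_assoc, hAF k k hk, hFF]
      abel
    rw [hrec k hk, e1, e2]
    abel
  -- unrolled recursion
  have hUnroll : ∀ m : ℕ, ω (m + 2) - onephi (φ (m + 2)) * ω (m + 2) =
      PB A φ 1 m * (ω 1 - onephi (φ 1) * ω 1)
      + (∑ l ∈ Finset.Ico 1 (m + 1),
          PB A φ (l + 1) (m - l) * (d l - onephi (φ (l + 1)) * d l))
      + (d (m + 1) - onephi (φ (m + 2)) * d (m + 1)) := by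
    intro m
    induction m with
    | zero =>
      have h := hErrRec 1 le_rfl
      simpa [PB] using h
    | succ m ih =>
      have hrec2 := hErrRec (m + 2) (by omega)
      rw [hrec2, ih]
      have p1 : (A (m + 2) - onephi (φ (m + 2))) * PB A φ 1 m = PB A φ 1 (m + 1) := by
        have h1 : PB A φ 1 (m + 1)
            = (A (1 + m + 1) - onephi (φ (1 + m + 1))) * PB A φ 1 m := rfl
        rw [h1, show 1 + m + 1 = m + 2 by omega]
      have p2 : (A (m + 2) - onephi (φ (m + 2))) *
          (∑ l ∈ Finset.Ico 1 (m + 1),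
            PB A φ (l + 1) (m - l) * (d l - onephi (φ (l + 1)) * d l))
          = ∑ l ∈ Finset.Ico 1 (m + 1),
            PB A φ (l + 1) (m + 1 - l) * (d l - onephi (φ (l + 1)) * d l) := by
        rw [Matrix.mul_sum]
        apply Finset.sum_congr rfl
        intro l hl
        obtain ⟨hl1, hl2⟩ := Finset.mem_Ico.mp hl
        rw [← Matrix.mul_assoc]
        congr 1
        have h3 : PB A φ (l + 1) ((m - l) + 1)
            = (A ((l + 1) + (m - l) + 1) - onephi (φ ((l + 1) + (m - l) + 1)))
              * PB A φ (l + 1) (m - l) := rfl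
        rw [show m + 1 - l = (m - l) + 1 by omega, h3,
          show (l + 1) + (m - l) + 1 = m + 2 by omega]
      have p3 : ∑ l ∈ Finset.Ico 1 (m + 1 + 1),
            PB A φ (l + 1) (m + 1 - l) * (d l - onephi (φ (l + 1)) * d l)
          = (∑ l ∈ Finset.Ico 1 (m + 1),
              PB A φ (l + 1) (m + 1 - l) * (d l - onephi (φ (l + 1)) * d l))
            + (A (m + 2) - onephi (φ (m + 2))) * (d (m + 1) - onephi (φ (m + 2)) * d (m + 1)) := by
        rw [Finset.sum_Ico_succ_top (by omega)]
        congr 1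
        have h4 : PB A φ (m + 1 + 1) (m + 1 - (m + 1)) = A (m + 2) - onephi (φ (m + 2)) := by
          rw [show m + 1 - (m + 1) = 0 by omega]; rfl
        rw [h4]
      rw [Matrix.mul_add, Matrix.mul_add, ← Matrix.mul_assoc, p1, p2, p3]
      abel
  -- norm bounds
  have hPBnorm : ∀ s t, 1 ≤ s → frobNorm (PB A φ s t : Fin N → Fin N → ℝ) ≤ C * β ^ t := by
    intro s t hs
    have h := hgeo s (s + t) hs (by omega)
    rw [show s + t - s = t by omega] at h
    rw [hPBeq s hs t]
    have e : ((PhiA A s t - onephi (φ s) : Matrix (Fin N) (Fin N) ℝ) : Fin N → Fin N → ℝ)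
        = fun i j => PhiA A s t i j - φ s j := rfl
    rw [e]; exact h
  have hsN : (0:ℝ) ≤ Real.sqrt N := Real.sqrt_nonneg _
  have hGnorm : ∀ l, 1 ≤ l →
      frobNorm ((d l - onephi (φ (l + 1)) * d l : Matrix (Fin N) (Fin r) ℝ))
        ≤ (1 + Real.sqrt N) * (K * α l) := by
    intro l hl
    have h1 := frob_matrix_sub_le (d l) (onephi (φ (l + 1)) * d l)
    have h2 : frobNorm (onephi (φ (l + 1)) * d l : Matrix (Fin N) (Fin r) ℝ)
        ≤ Real.sqrt N * (K * α l) := by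
      calc frobNorm (onephi (φ (l + 1)) * d l : Matrix (Fin N) (Fin r) ℝ)
          ≤ frobNorm (onephi (φ (l + 1)) : Fin N → Fin N → ℝ) * frobNorm (d l) :=
            frob_matrix_mul_le _ _
        _ ≤ Real.sqrt N * (K * α l) := by
            apply mul_le_mul (frob_onephi_le _ (hφstoch (l+1)).1 (hφstoch (l+1)).2)
              (hd l hl) (frob_nonneg _) hsN
    have h3 := hd l hl
    calc frobNorm ((d l - onephi (φ (l + 1)) * d l : Matrix (Fin N) (Fin r) ℝ))
        ≤ frobNorm (d l) + frobNorm (onephi (φ (l + 1)) * d l : Matrix (Fin N) (Fin r) ℝ) := h1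
      _ ≤ K * α l + Real.sqrt N * (K * α l) := add_le_add h3 h2
      _ = (1 + Real.sqrt N) * (K * α l) := by ring
  set E1 : ℝ := frobNorm ((ω 1 - onephi (φ 1) * ω 1 : Matrix (Fin N) (Fin r) ℝ)) with hE1
  have hE1nn : 0 ≤ E1 := frob_nonneg _
  refine ⟨C * (E1 + 1), C * ((1 + Real.sqrt N) * K), (1 + Real.sqrt N) * K,
    by positivity, by positivity, by positivity, ?_⟩
  intro k hk
  obtain ⟨m, rfl⟩ : ∃ m, k = m + 1 := ⟨k - 1, by omega⟩
  have egoal : (fun i c => ω (m + 1 + 1) i c - ∑ j, φ (m + 1 + 1) j * ω (m + 1 + 1) j c)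
      = ((ω (m + 2) - onephi (φ (m + 2)) * ω (m + 2) : Matrix (Fin N) (Fin r) ℝ)
          : Fin N → Fin r → ℝ) := by
    ext i c
    simp [Matrix.sub_apply, Matrix.mul_apply, onephi]
  rw [egoal, hUnroll m]
  have hb1 : frobNorm ((PB A φ 1 m * (ω 1 - onephi (φ 1) * ω 1)
        : Matrix (Fin N) (Fin r) ℝ)) ≤ C * β ^ m * E1 := by
    calc frobNorm ((PB A φ 1 m * (ω 1 - onephi (φ 1) * ω 1) : Matrix (Fin N) (Fin r) ℝ))
        ≤ frobNorm (PB A φ 1 m : Fin N → Fin N → ℝ) * E1 := frob_matrix_mul_le _ _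
      _ ≤ C * β ^ m * E1 := by
          apply mul_le_mul_of_nonneg_right (hPBnorm 1 m le_rfl) hE1nn
  have hb2 : frobNorm ((∑ l ∈ Finset.Ico 1 (m + 1),
        PB A φ (l + 1) (m - l) * (d l - onephi (φ (l + 1)) * d l)
          : Matrix (Fin N) (Fin r) ℝ))
      ≤ ∑ l ∈ Finset.Ico 1 (m + 1), C * β ^ (m - l) * ((1 + Real.sqrt N) * (K * α l)) := by
    calc frobNorm ((∑ l ∈ Finset.Ico 1 (m + 1),
          PB A φ (l + 1) (m - l) * (d l - onephi (φ (l + 1)) * d l)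
            : Matrix (Fin N) (Fin r) ℝ))
        ≤ ∑ l ∈ Finset.Ico 1 (m + 1),
            frobNorm ((PB A φ (l + 1) (m - l) * (d l - onephi (φ (l + 1)) * d l)
              : Matrix (Fin N) (Fin r) ℝ)) := frob_matrix_sum_le _ _
      _ ≤ ∑ l ∈ Finset.Ico 1 (m + 1), C * β ^ (m - l) * ((1 + Real.sqrt N) * (K * α l)) := by
          apply Finset.sum_le_sum
          intro l hl
          obtain ⟨hl1, _⟩ := Finset.mem_Ico.mp hl
          calc frobNorm ((PB A φ (l + 1) (m - l) * (d l - onephi (φ (l + 1)) * d l)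
                : Matrix (Fin N) (Fin r) ℝ))
              ≤ frobNorm (PB A φ (l + 1) (m - l) : Fin N → Fin N → ℝ)
                  * frobNorm ((d l - onephi (φ (l + 1)) * d l : Matrix (Fin N) (Fin r) ℝ)) :=
                frob_matrix_mul_le _ _
            _ ≤ C * β ^ (m - l) * ((1 + Real.sqrt N) * (K * α l)) := by
                apply mul_le_mul (hPBnorm (l + 1) (m - l) (by omega)) (hGnorm l hl1)
                  (frob_nonneg _) (by positivity)
  have hb3 := hGnorm (m + 1) (by omega)
  have htri : frobNorm ((PB A φ 1 m * (ω 1 - onephi (φ 1) * ω 1)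
        + (∑ l ∈ Finset.Ico 1 (m + 1),
            PB A φ (l + 1) (m - l) * (d l - onephi (φ (l + 1)) * d l))
        + (d (m + 1) - onephi (φ (m + 2)) * d (m + 1)) : Matrix (Fin N) (Fin r) ℝ))
      ≤ frobNorm ((PB A φ 1 m * (ω 1 - onephi (φ 1) * ω 1) : Matrix (Fin N) (Fin r) ℝ))
        + frobNorm ((∑ l ∈ Finset.Ico 1 (m + 1),
            PB A φ (l + 1) (m - l) * (d l - onephi (φ (l + 1)) * d l)
              : Matrix (Fin N) (Fin r) ℝ))
        + frobNorm ((d (m + 1) - onephi (φ (m + 2)) * d (m + 1)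
              : Matrix (Fin N) (Fin r) ℝ)) := by
    calc _ ≤ frobNorm ((PB A φ 1 m * (ω 1 - onephi (φ 1) * ω 1)
          + (∑ l ∈ Finset.Ico 1 (m + 1),
              PB A φ (l + 1) (m - l) * (d l - onephi (φ (l + 1)) * d l))
            : Matrix (Fin N) (Fin r) ℝ))
          + frobNorm ((d (m + 1) - onephi (φ (m + 2)) * d (m + 1)
              : Matrix (Fin N) (Fin r) ℝ)) := frob_matrix_add_le _ _
      _ ≤ _ := by
          have := frob_matrix_add_le (PB A φ 1 m * (ω 1 - onephi (φ 1) * ω 1))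
            (∑ l ∈ Finset.Ico 1 (m + 1),
              PB A φ (l + 1) (m - l) * (d l - onephi (φ (l + 1)) * d l))
          linarith
  have hfinal : C * β ^ m * E1
      + (∑ l ∈ Finset.Ico 1 (m + 1), C * β ^ (m - l) * ((1 + Real.sqrt N) * (K * α l)))
      + (1 + Real.sqrt N) * (K * α (m + 1))
      ≤ C * (E1 + 1) * β ^ (m + 1 - 1)
        + C * ((1 + Real.sqrt N) * K) * ∑ l ∈ Finset.Ico 1 (m + 1), β ^ (m + 1 - 1 - l) * α l
        + (1 + Real.sqrt N) * K * α (m + 1) := by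
    have hpow : (0:ℝ) < β ^ m := pow_pos hβ0 m
    have e1 : m + 1 - 1 = m := by omega
    rw [e1]
    have e2 : (∑ l ∈ Finset.Ico 1 (m + 1), C * β ^ (m - l) * ((1 + Real.sqrt N) * (K * α l)))
        = C * ((1 + Real.sqrt N) * K) * ∑ l ∈ Finset.Ico 1 (m + 1), β ^ (m - l) * α l := by
      rw [Finset.mul_sum]
      apply Finset.sum_congr rfl
      intro l _
      ring
    rw [e2]
    have : C * β ^ m * E1 ≤ C * (E1 + 1) * β ^ m := by nlinarith
    linarith [this]
  calc frobNorm ((PB A φ 1 m * (ω 1 - onephi (φ 1) * ω 1)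
        + (∑ l ∈ Finset.Ico 1 (m + 1),
            PB A φ (l + 1) (m - l) * (d l - onephi (φ (l + 1)) * d l))
        + (d (m + 1) - onephi (φ (m + 2)) * d (m + 1)) : Matrix (Fin N) (Fin r) ℝ))
      ≤ C * β ^ m * E1
        + (∑ l ∈ Finset.Ico 1 (m + 1), C * β ^ (m - l) * ((1 + Real.sqrt N) * (K * α l)))
        + (1 + Real.sqrt N) * (K * α (m + 1)) := by linarith [htri, hb1, hb2, hb3]
    _ ≤ _ := hfinal
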